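/- Let $G$ be a finitely generated group with word metric and let $c \in \ell^\infty(G)$ satisfy the negation of Whyte's boundedness condition: for every $C, r \in \mathbb{N}_{>0}$ there exists a finite set $F \subseteq G$ with $|\sum_{s\in F} c(s)| > C \cdot |\partial_r F|$. Then there exists a F\o lner sequence $(S'_n)_{n\in\mathbb{N}}$ in $G$ such that $\lim_{n\to\infty} \frac{|\partial_1 S'_n|}{|\sum_{s\in S'_n} c(s)|} = 0$; in particular $\lim_{n\to\infty} \frac{|\partial_1 S'_n|}{|S'_n|} = 0$ while $\frac{|\sum_{s\in S'_n} c(s)|}{|S'_n|}$ dominates it. -/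

import Mathlib

/-- The word distance on a group `G` with respect to a generating set `Sg`:
`d(g,h)` is the minimal length of a word in `Sg ∪ Sg⁻¹` representing `g⁻¹h`. -/
noncomputable def wordDist {G : Type*} [Group G] (Sg : Set G) (g h : G) : ℕ :=
  sInf {n | ∃ w : List G, w.length = n ∧ (∀ x ∈ w, x ∈ Sg ∨ x⁻¹ ∈ Sg) ∧ w.prod = g⁻¹ * h}

/-- The closed ball of radius `r` around `g` in the word metric. -/
noncomputable def wball {G : Type*} [Group G] (Sg : Set G) (g : G) (r : ℕ) : Set G :=
  {x | wordDist Sg g x ≤ r}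

/-- The `r`-boundary `∂_r A = {g : 0 < d(g, A) ≤ r}` of a set `A`. -/
noncomputable def rBoundary {G : Type*} [Group G] (Sg : Set G) (r : ℕ) (A : Set G) : Set G :=
  {g | g ∉ A ∧ ∃ a ∈ A, wordDist Sg a g ≤ r}

/-- A Følner sequence: a sequence of nonempty finite subsets whose `r`-boundaries are
asymptotically negligible for every `r > 0`. -/
def IsFolner {G : Type*} [Group G] (Sg : Set G) (S : ℕ → Finset G) : Prop :=
  (∀ j, (S j).Nonempty) ∧ ∀ r : ℕ, 0 < r →
    Filter.Tendsto (fun j => ((rBoundary Sg r (S j : Set G)).ncard : ℝ) / (S j).card)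
      Filter.atTop (nhds 0)

/-- `c : G → ℝ` is a boundary in the degree-zero uniformly finite chain complex: there is
a bounded `1`-chain `b : G² → ℝ`, supported on pairs of uniformly bounded distance, with
`∂₁ b = c`, where `∂₁ b (x) = ∑_y b(y,x) - ∑_y b(x,y)`. -/
noncomputable def IsUFBoundary {G : Type*} [Group G] (Sg : Set G) (c : G → ℝ) : Prop :=
  ∃ b : G × G → ℝ,
    (∃ C : ℝ, ∀ p, |b p| ≤ C) ∧
    (∃ R : ℕ, ∀ p : G × G, R < wordDist Sg p.1 p.2 → b p = 0) ∧
    ∀ x : G, c x = (∑ᶠ y, b (y, x)) - (∑ᶠ y, b (x, y))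

section Aux
variable {G : Type*} [Group G]

lemma exists_word {Sg : Set G} (hgen : Subgroup.closure Sg = ⊤) (g : G) :
    ∃ w : List G, (∀ x ∈ w, x ∈ Sg ∨ x⁻¹ ∈ Sg) ∧ w.prod = g := by
  have hg : g ∈ Submonoid.closure (Sg ∪ Sg⁻¹) := by
    rw [← Subgroup.closure_toSubmonoid, hgen]; trivial
  obtain ⟨l, hl, hp⟩ := Submonoid.exists_list_of_mem_closure hg
  exact ⟨l, fun x hx => by
    rcases hl x hx with h | h
    · exact Or.inl h
    · exact Or.inr (Set.mem_inv.mp h), hp⟩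

lemma wordDist_le {Sg : Set G} (hgen : Subgroup.closure Sg = ⊤) {g h : G} {r : ℕ}
    (hle : wordDist Sg g h ≤ r) :
    ∃ w : List G, w.length ≤ r ∧ (∀ x ∈ w, x ∈ Sg ∨ x⁻¹ ∈ Sg) ∧ w.prod = g⁻¹ * h := by
  obtain ⟨w, hw, hp⟩ := exists_word hgen (g⁻¹ * h)
  have hne : {n | ∃ w : List G, w.length = n ∧ (∀ x ∈ w, x ∈ Sg ∨ x⁻¹ ∈ Sg)
      ∧ w.prod = g⁻¹ * h}.Nonempty := ⟨w.length, w, rfl, hw, hp⟩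
  obtain ⟨w', hw'len, hw', hp'⟩ := Nat.sInf_mem hne
  exact ⟨w', by rw [hw'len]; exact hle, hw', hp'⟩

lemma lists_finite (Sg : Finset G) (r : ℕ) :
    {w : List G | w.length ≤ r ∧ ∀ x ∈ w, x ∈ (Sg : Set G) ∨ x⁻¹ ∈ (Sg : Set G)}.Finite := by
  induction r with
  | zero =>
      apply Set.Finite.subset (Set.finite_singleton ([] : List G))
      rintro w ⟨hlen, -⟩
      simp [List.length_eq_zero_iff.mp (Nat.le_zero.mp hlen)]
  | succ n ih =>
      have hT : ((Sg : Set G) ∪ (Sg : Set G)⁻¹).Finite :=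
        (Sg.finite_toSet).union (Sg.finite_toSet.inv)
      apply Set.Finite.subset (((hT.image2 List.cons ih).insert ([] : List G)))
      rintro w ⟨hlen, hmem⟩
      cases w with
      | nil => exact Set.mem_insert _ _
      | cons x t =>
          refine Set.mem_insert_of_mem _ (Set.mem_image2_of_mem ?_ ⟨?_, ?_⟩)
          · rcases hmem x List.mem_cons_self with h | h
            · exact Or.inl h
            · exact Or.inr (Set.mem_inv.mpr h)
          · simpa using hlen
          · exact fun y hy => hmem y (List.mem_cons_of_mem x hy)

lemma wball_finite (Sg : Finset G) (hgen : Subgroup.closure (Sg : Set G) = ⊤) (a : G) (r : ℕ) :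
    {x | wordDist (Sg : Set G) a x ≤ r}.Finite := by
  apply Set.Finite.subset ((lists_finite Sg r).image (fun w => a * w.prod))
  intro x hx
  obtain ⟨w, hlen, hw, hp⟩ := wordDist_le hgen hx
  exact ⟨w, ⟨hlen, hw⟩, by show a * w.prod = x; rw [hp]; group⟩

lemma boundary_finite (Sg : Finset G) (hgen : Subgroup.closure (Sg : Set G) = ⊤)
    (A : Finset G) (r : ℕ) : (rBoundary (Sg : Set G) r (A : Set G)).Finite := by
  apply Set.Finite.subset (Set.Finite.biUnion A.finite_toSet
    (fun a _ => wball_finite Sg hgen a r))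
  rintro g ⟨-, a, ha, hd⟩
  exact Set.mem_biUnion ha hd

lemma boundary_mono (Sg : Set G) {r r' : ℕ} (h : r ≤ r') (A : Set G) :
    rBoundary Sg r A ⊆ rBoundary Sg r' A := by
  rintro g ⟨hg, a, ha, hd⟩
  exact ⟨hg, a, ha, hd.trans h⟩

end Aux


/-- If `c ∈ ℓ∞(G)` satisfies the negation of Whyte's boundedness
condition, then there is a Følner sequence `(S'_n)` with
`|∂₁ S'_n| / |∑_{s ∈ S'_n} c(s)| → 0`; in particular `(S'_n)` is Følner while
`β_c` dominates `σ` along it. -/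
theorem folner_from_whyte_failure {G : Type*} [Group G]
    (Sg : Finset G) (hgen : Subgroup.closure (Sg : Set G) = ⊤)
    (c : G → ℝ) (hc : ∃ C : ℝ, ∀ g, |c g| ≤ C)
    (hW : ∀ C r : ℕ, 0 < C → 0 < r → ∃ F : Finset G,
      (C : ℝ) * ((rBoundary (Sg : Set G) r (F : Set G)).ncard : ℝ) < |∑ s ∈ F, c s|) :
    ∃ S' : ℕ → Finset G,
      IsFolner (Sg : Set G) S'
      ∧ (∀ n, 0 < |∑ s ∈ S' n, c s|)
      ∧ Filter.Tendsto
          (fun n => ((rBoundary (Sg : Set G) 1 (S' n : Set G)).ncard : ℝ) /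
            |∑ s ∈ S' n, c s|)
          Filter.atTop (nhds 0) := by
  obtain ⟨C0, hC0⟩ := hc
  set M : ℝ := max C0 1 with hM
  have hM1 : (1:ℝ) ≤ M := le_max_right _ _
  have hMpos : (0:ℝ) < M := lt_of_lt_of_le one_pos hM1
  have hCc : ∀ g, |c g| ≤ M := fun g => (hC0 g).trans (le_max_left _ _)
  choose F hF using fun n => hW (n+1) (n+1) n.succ_pos n.succ_pos
  -- key inequality
  have key : ∀ n : ℕ, ((n:ℝ)+1) * ((rBoundary (Sg : Set G) (n+1) (F n : Set G)).ncard : ℝ)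
      < |∑ s ∈ F n, c s| := by
    intro n
    have := hF n
    push_cast at this
    exact this
  have hpos : ∀ n, 0 < |∑ s ∈ F n, c s| := by
    intro n
    refine lt_of_le_of_lt ?_ (key n)
    positivity
  have hne : ∀ n, (F n).Nonempty := by
    intro n
    rw [Finset.nonempty_iff_ne_empty]
    intro h
    have := hpos n
    rw [h] at this
    simp at this
  have hcard : ∀ n, (0:ℝ) < (F n).card := by
    intro n
    exact_mod_cast Finset.card_pos.mpr (hne n)
  have hsum : ∀ n, |∑ s ∈ F n, c s| ≤ M * (F n).card := by
    intro n
    calc |∑ s ∈ F n, c s| ≤ ∑ s ∈ F n, |c s| := Finset.abs_sum_le_sum_abs _ _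
      _ ≤ ∑ _s ∈ F n, M := Finset.sum_le_sum (fun s _ => hCc s)
      _ = M * (F n).card := by rw [Finset.sum_const, nsmul_eq_mul]; ring
  have hmono : ∀ n r, r ≤ n+1 →
      ((rBoundary (Sg : Set G) r (F n : Set G)).ncard : ℝ)
        ≤ ((rBoundary (Sg : Set G) (n+1) (F n : Set G)).ncard : ℝ) := by
    intro n r hr
    exact_mod_cast Set.ncard_le_ncard (boundary_mono _ hr _) (boundary_finite Sg hgen _ _)
  have hnlim : ∀ K : ℝ, Filter.Tendsto (fun n : ℕ => K / ((n:ℝ)+1)) Filter.atTop (nhds 0) := by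
    intro K
    have := (tendsto_const_div_atTop_nhds_zero_nat K).comp
      (Filter.tendsto_add_atTop_nat 1)
    exact this.congr fun n => by show K / ((n+1:ℕ):ℝ) = _; push_cast; ring
  refine ⟨F, ⟨hne, ?_⟩, hpos, ?_⟩
  · intro r hr
    apply squeeze_zero' (g := fun n : ℕ => M / ((n:ℝ)+1))
    · filter_upwards with n
      positivity
    · filter_upwards [Filter.eventually_ge_atTop r] with n hn
      have hr' : r ≤ n + 1 := hn.trans (Nat.le_succ n)
      have h1 : ((rBoundary (Sg : Set G) (n+1) (F n : Set G)).ncard : ℝ)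
          ≤ M * (F n).card / ((n:ℝ)+1) := by
        rw [le_div_iff₀ (by positivity)]
        nlinarith [key n, hsum n]
      calc ((rBoundary (Sg : Set G) r (F n : Set G)).ncard : ℝ) / (F n).card
          ≤ (M * (F n).card / ((n:ℝ)+1)) / (F n).card := by
            gcongr
            exact (hmono n r hr').trans h1
        _ = M / ((n:ℝ)+1) := by
            rw [div_right_comm, mul_div_cancel_right₀ _ (hcard n).ne']
    · exact hnlim M
  · apply squeeze_zero' (g := fun n : ℕ => 1 / ((n:ℝ)+1))
    · filter_upwards with n
      positivity
    · filter_upwards with n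
      have h1 : ((rBoundary (Sg : Set G) 1 (F n : Set G)).ncard : ℝ)
          ≤ |∑ s ∈ F n, c s| / ((n:ℝ)+1) := by
        rw [le_div_iff₀ (by positivity)]
        nlinarith [key n, hmono n 1 n.succ_pos]
      calc ((rBoundary (Sg : Set G) 1 (F n : Set G)).ncard : ℝ) / |∑ s ∈ F n, c s|
          ≤ (|∑ s ∈ F n, c s| / ((n:ℝ)+1)) / |∑ s ∈ F n, c s| := by
            gcongr
        _ = 1 / ((n:ℝ)+1) := by
            rw [div_right_comm, div_self (hpos n).ne']
    · exact hnlim 1
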